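/- Let A, B ∈ ℂ^{N×N} with generalized Schur form Q*BZ = [[α, b*],[0, B₁]] and Q*AZ = [[β, a*],[0, A₁]] where Q = [q₁ Q₂], Z = [z₁ Z₂] are unitary, z₁ = v/‖v‖₂ for an eigenvector v of the pencil A − λB with eigenvalue λ₀ = β/α. If λ̃₀ is not an eigenvalue of A − λB (so A₁ − λ̃₀B₁ is invertible), then for any nonzero ṽ ∈ ℂ^N, sin∠(v, ṽ) ≤ ‖(A − λ̃₀B)ṽ‖₂ / (‖ṽ‖₂ · σ_min(A₁ − λ̃₀B₁)). -/

import Mathlib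

open scoped BigOperators
open Matrix

/-- Euclidean norm of a finite complex vector. -/
noncomputable def vecNorm2 {ι : Type*} [Fintype ι] (v : ι → ℂ) : ℝ :=
  Real.sqrt (∑ i, ‖v i‖ ^ 2)

/-- Standard Hermitian inner product `w* u` (conjugate-linear in `w`). -/
noncomputable def cinner {ι : Type*} [Fintype ι] (w v : ι → ℂ) : ℂ :=
  ∑ i, (starRingEnd ℂ) (w i) * v i

/-- Sine of the acute angle between two vectors. -/
noncomputable def sinAngle {ι : Type*} [Fintype ι] (u w : ι → ℂ) : ℝ :=
  Real.sqrt (1 - ‖cinner w u‖ ^ 2 / (vecNorm2 u ^ 2 * vecNorm2 w ^ 2))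

/-- Spectral (operator 2-) norm of a square complex matrix. -/
noncomputable def opNorm {k : Type*} [Fintype k] [DecidableEq k]
    (M : Matrix k k ℂ) : ℝ :=
  ‖Matrix.toEuclideanCLM (𝕜 := ℂ) M‖

/-- Smallest singular value of an invertible matrix: `σ_min(M) = ‖M⁻¹‖₂⁻¹`.
This equals `sep(λ,(A₁,B₁))` when `M = A₁ - λ B₁`. -/
noncomputable def sigmaMin {k : Type*} [Fintype k] [DecidableEq k]
    (M : Matrix k k ℂ) : ℝ :=
  (opNorm M⁻¹)⁻¹

lemma cinner_eq_dot {ι : Type*} [Fintype ι] (w u : ι → ℂ) :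
    cinner w u = star w ⬝ᵥ u := by
  simp [cinner, dotProduct, Pi.star_apply, RCLike.star_def]

lemma vecNorm2_eq_norm {ι : Type*} [Fintype ι] (v : ι → ℂ) :
    vecNorm2 v = ‖(WithLp.equiv 2 (ι → ℂ)).symm v‖ := by
  rw [EuclideanSpace.norm_eq]
  simp [vecNorm2]

lemma vecNorm2_nonneg' {ι : Type*} [Fintype ι] (v : ι → ℂ) : 0 ≤ vecNorm2 v :=
  Real.sqrt_nonneg _

lemma vecNorm2_pos {ι : Type*} [Fintype ι] {v : ι → ℂ} (hv : v ≠ 0) : 0 < vecNorm2 v := by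
  rw [vecNorm2_eq_norm]
  rw [norm_pos_iff]
  intro h
  exact hv ((WithLp.equiv 2 (ι → ℂ)).symm.injective (by simpa using h))

lemma vecNorm2_sq {ι : Type*} [Fintype ι] (v : ι → ℂ) :
    vecNorm2 v ^ 2 = ∑ i, ‖v i‖ ^ 2 :=
  Real.sq_sqrt (Finset.sum_nonneg fun i _ => sq_nonneg _)

lemma cinner_self_re {ι : Type*} [Fintype ι] (x : ι → ℂ) :
    (cinner x x).re = ∑ i, ‖x i‖ ^ 2 := by
  simp [cinner, Complex.re_sum, Complex.conj_mul', ← Complex.ofReal_pow]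

lemma vecNorm2_eq_cinner {ι : Type*} [Fintype ι] (x : ι → ℂ) :
    vecNorm2 x = Real.sqrt ((cinner x x).re) := by rw [cinner_self_re]; rfl

lemma cinner_mulVec_unitary {k : Type*} [Fintype k] [DecidableEq k]
    {U : Matrix k k ℂ} (hU : U ∈ Matrix.unitaryGroup k ℂ) (w u : k → ℂ) :
    cinner (U *ᵥ w) (U *ᵥ u) = cinner w u := by
  have h1 : Uᴴ * U = 1 := by
    rw [← Matrix.star_eq_conjTranspose]; exact (Unitary.mem_iff.mp hU).1
  rw [cinner_eq_dot, cinner_eq_dot, Matrix.star_mulVec, Matrix.dotProduct_mulVec,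
    Matrix.vecMul_vecMul, h1, Matrix.vecMul_one]

lemma vecNorm2_mulVec_unitary {k : Type*} [Fintype k] [DecidableEq k]
    {U : Matrix k k ℂ} (hU : U ∈ Matrix.unitaryGroup k ℂ) (x : k → ℂ) :
    vecNorm2 (U *ᵥ x) = vecNorm2 x := by
  rw [vecNorm2_eq_cinner, vecNorm2_eq_cinner, cinner_mulVec_unitary hU]

lemma mulVec_vecNorm2_le {k : Type*} [Fintype k] [DecidableEq k]
    (M : Matrix k k ℂ) (x : k → ℂ) :
    vecNorm2 (M *ᵥ x) ≤ opNorm M * vecNorm2 x := by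
  rw [vecNorm2_eq_norm, vecNorm2_eq_norm, WithLp.equiv_symm_apply,
    ← Matrix.toEuclideanCLM_toLp]
  exact (Matrix.toEuclideanCLM (𝕜 := ℂ) M).le_opNorm _

/-- Eigenvector error bound for the generalized eigenvalue problem: with a
generalized Schur form of the pencil `A - λB` deflating the eigenpair
`(λ₀, v)` (first column of `Z` equal to `v/‖v‖`), and `λ̃₀` not an eigenvalue,
`sin∠(v,ṽ) ≤ ‖(A - λ̃₀B)ṽ‖ / (‖ṽ‖ σ_min(A₁ - λ̃₀B₁))`. -/
theorem stmt8 {N : ℕ} (A B : Matrix (Fin (N + 1)) (Fin (N + 1)) ℂ)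
    (Q Z : Matrix (Fin (N + 1)) (Fin (N + 1)) ℂ)
    (hQ : Q ∈ Matrix.unitaryGroup (Fin (N + 1)) ℂ)
    (hZ : Z ∈ Matrix.unitaryGroup (Fin (N + 1)) ℂ)
    (v : Fin (N + 1) → ℂ) (hv : v ≠ 0) (lam0 lamt : ℂ)
    (hz1 : ∀ p, Z p 0 = v p / (vecNorm2 v : ℂ))
    (hA0 : ∀ i : Fin N, (Qᴴ * A * Z) i.succ 0 = 0)
    (hB0 : ∀ i : Fin N, (Qᴴ * B * Z) i.succ 0 = 0)
    (hA1tri : ∀ i j : Fin N, j < i → (Qᴴ * A * Z) i.succ j.succ = 0)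
    (hB1tri : ∀ i j : Fin N, j < i → (Qᴴ * B * Z) i.succ j.succ = 0)
    (hlam0 : lam0 = (Qᴴ * A * Z) 0 0 / (Qᴴ * B * Z) 0 0)
    (heig : A.mulVec v = lam0 • B.mulVec v)
    (hnoteig : (A - lamt • B).det ≠ 0)
    (hinv : IsUnit (Matrix.of fun i j : Fin N =>
      (Qᴴ * A * Z) i.succ j.succ - lamt * (Qᴴ * B * Z) i.succ j.succ))
    (vt : Fin (N + 1) → ℂ) (hvt : vt ≠ 0) :
    sinAngle v vt ≤
      vecNorm2 ((A - lamt • B).mulVec vt) /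
        (vecNorm2 vt * sigmaMin (Matrix.of fun i j : Fin N =>
          (Qᴴ * A * Z) i.succ j.succ - lamt * (Qᴴ * B * Z) i.succ j.succ)) := by
  classical
  set S₁ : Matrix (Fin N) (Fin N) ℂ := Matrix.of fun i j : Fin N =>
      (Qᴴ * A * Z) i.succ j.succ - lamt * (Qᴴ * B * Z) i.succ j.succ with hS₁def
  set M : Matrix (Fin (N + 1)) (Fin (N + 1)) ℂ := A - lamt • B with hMdef
  set S : Matrix (Fin (N + 1)) (Fin (N + 1)) ℂ := Qᴴ * M * Z with hSdef
  -- unitarity facts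
  have hZ1 : Zᴴ * Z = 1 := by
    rw [← Matrix.star_eq_conjTranspose]; exact (Unitary.mem_iff.mp hZ).1
  have hZ2 : Z * Zᴴ = 1 := by
    rw [← Matrix.star_eq_conjTranspose]; exact (Unitary.mem_iff.mp hZ).2
  have hQ2 : Q * Qᴴ = 1 := by
    rw [← Matrix.star_eq_conjTranspose]; exact (Unitary.mem_iff.mp hQ).2
  set c : Fin (N + 1) → ℂ := Zᴴ *ᵥ vt with hcdef
  have hvtc : Z *ᵥ c = vt := by
    rw [hcdef, Matrix.mulVec_mulVec, hZ2, Matrix.one_mulVec]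
  set c' : Fin N → ℂ := fun i => c i.succ with hc'def
  -- entries of S
  have hSentry : ∀ i j, S i j = (Qᴴ * A * Z) i j - lamt * ((Qᴴ * B * Z) i j) := by
    intro i j
    simp [hSdef, hMdef, Matrix.mul_sub, Matrix.sub_mul, Matrix.mul_smul,
      Matrix.smul_mul, Matrix.sub_apply, Matrix.smul_apply, smul_eq_mul]
  have hSrow0 : ∀ i : Fin N, S i.succ 0 = 0 := by
    intro i; rw [hSentry, hA0, hB0]; ring
  have hS1entry : ∀ i j : Fin N, S i.succ j.succ = S₁ i j := by
    intro i j; rw [hSentry]; rfl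
  -- tail of S *ᵥ c
  have htail : ∀ i : Fin N, (S *ᵥ c) i.succ = (S₁ *ᵥ c') i := by
    intro i
    simp only [Matrix.mulVec, dotProduct, Fin.sum_univ_succ, hSrow0, zero_mul, zero_add]
    exact Finset.sum_congr rfl fun j _ => by rw [hS1entry]
  -- norms
  have hnvt : vecNorm2 vt = vecNorm2 c := by rw [← hvtc, vecNorm2_mulVec_unitary hZ]
  have hMvt : vecNorm2 (M *ᵥ vt) = vecNorm2 (S *ᵥ c) := by
    have h1 : Q * S = M * Z := by
      rw [hSdef, ← Matrix.mul_assoc, ← Matrix.mul_assoc, hQ2, Matrix.one_mul]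
    have key : M *ᵥ vt = Q *ᵥ (S *ᵥ c) := by
      rw [Matrix.mulVec_mulVec, h1, ← Matrix.mulVec_mulVec, hvtc]
    rw [key, vecNorm2_mulVec_unitary hQ]
  set a : ℝ := ‖c 0‖ with hadef
  set b : ℝ := vecNorm2 c' with hbdef
  set n : ℝ := vecNorm2 c with hndef
  set e : ℝ := vecNorm2 (S *ᵥ c) with hedef
  set t : ℝ := opNorm S₁⁻¹ with htdef
  have hn_pos : 0 < n := hnvt ▸ vecNorm2_pos hvt
  have hnsq : n ^ 2 = a ^ 2 + b ^ 2 := by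
    rw [hndef, hbdef, vecNorm2_sq, vecNorm2_sq, Fin.sum_univ_succ]
  have hb0 : 0 ≤ b := vecNorm2_nonneg' _
  have he0 : 0 ≤ e := vecNorm2_nonneg' _
  have ht0 : 0 ≤ t := norm_nonneg _
  -- ‖S₁ c'‖ ≤ e
  have hS1le : vecNorm2 (S₁ *ᵥ c') ≤ e := by
    rw [hedef]
    have h1 : vecNorm2 (S₁ *ᵥ c') ^ 2 ≤ vecNorm2 (S *ᵥ c) ^ 2 := by
      rw [vecNorm2_sq, vecNorm2_sq, Fin.sum_univ_succ]
      have : ∑ i : Fin N, ‖(S *ᵥ c) i.succ‖ ^ 2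
          = ∑ i : Fin N, ‖(S₁ *ᵥ c') i‖ ^ 2 :=
        Finset.sum_congr rfl fun i _ => by rw [htail]
      rw [this]
      nlinarith [sq_nonneg (‖(S *ᵥ c) 0‖)]
    calc vecNorm2 (S₁ *ᵥ c') = Real.sqrt (vecNorm2 (S₁ *ᵥ c') ^ 2) :=
          (Real.sqrt_sq (vecNorm2_nonneg' _)).symm
      _ ≤ Real.sqrt (vecNorm2 (S *ᵥ c) ^ 2) := Real.sqrt_le_sqrt h1
      _ = vecNorm2 (S *ᵥ c) := Real.sqrt_sq (vecNorm2_nonneg' _)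
  -- b ≤ t * e
  have hbte : b ≤ t * e := by
    have hcinv : c' = S₁⁻¹ *ᵥ (S₁ *ᵥ c') := by
      rw [Matrix.mulVec_mulVec,
        Matrix.nonsing_inv_mul S₁ ((Matrix.isUnit_iff_isUnit_det _).mp hinv),
        Matrix.one_mulVec]
    calc b = vecNorm2 (S₁⁻¹ *ᵥ (S₁ *ᵥ c')) := by rw [hbdef, ← hcinv]
      _ ≤ t * vecNorm2 (S₁ *ᵥ c') := mulVec_vecNorm2_le _ _
      _ ≤ t * e := by nlinarith
  -- compute cinner vt v
  have hnv : (vecNorm2 v : ℂ) ≠ 0 := by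
    exact_mod_cast (vecNorm2_pos hv).ne'
  have hvcol : ∀ p, v p = (vecNorm2 v : ℂ) * Z p 0 := by
    intro p; rw [hz1]; field_simp
  have hcinner : cinner vt v = (vecNorm2 v : ℂ) * (starRingEnd ℂ) (c 0) := by
    have h1 : cinner vt v = (vecNorm2 v : ℂ) * cinner vt (fun p => Z p 0) := by
      simp only [cinner, Finset.mul_sum]
      exact Finset.sum_congr rfl fun p _ => by rw [hvcol p]; ring
    have h2 : (fun p => Z p 0) = Z *ᵥ Pi.single 0 1 := by
      funext p
      simp [Matrix.mulVec, dotProduct, Pi.single_apply]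
    have h3 : cinner vt (fun p => Z p 0) = (starRingEnd ℂ) (c 0) := by
      rw [h2, ← hvtc, cinner_mulVec_unitary hZ]
      simp [cinner, Pi.single_apply]
    rw [h1, h3]
  have habs : ‖cinner vt v‖ = vecNorm2 v * a := by
    rw [hcinner, norm_mul, Complex.norm_real, Real.norm_eq_abs, abs_of_nonneg (vecNorm2_nonneg' v),
      Complex.norm_conj]
  -- sinAngle value
  have hsin : sinAngle v vt = b / n := by
    have hv_pos : (0:ℝ) < vecNorm2 v := vecNorm2_pos hv
    have : ‖cinner vt v‖ ^ 2 / (vecNorm2 v ^ 2 * vecNorm2 vt ^ 2)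
        = a ^ 2 / n ^ 2 := by
      rw [habs, hnvt]
      have h1 : vecNorm2 v ≠ 0 := hv_pos.ne'
      have h2 : n ≠ 0 := hn_pos.ne'
      field_simp
    rw [sinAngle, this]
    have : 1 - a ^ 2 / n ^ 2 = (b / n) ^ 2 := by
      field_simp
      nlinarith [hnsq]
    rw [this, Real.sqrt_sq (div_nonneg hb0 hn_pos.le)]
  -- finish
  rw [hsin, hMvt, hnvt]
  show b / n ≤ e / (n * sigmaMin S₁)
  rw [sigmaMin, ← htdef]
  rcases eq_or_lt_of_le ht0 with ht | ht
  · have hb : b = 0 := le_antisymm (by nlinarith) hb0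
    simp [← ht, hb]
  · have h1 : e / (n * t⁻¹) = e * t / n := by
      field_simp
    rw [h1]
    have hb2 : b ≤ e * t := by rw [mul_comm]; exact hbte
    exact (div_le_div_iff_of_pos_right hn_pos).mpr hb2
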